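/- Let φ : ℝ → ℝ be continuously differentiable. Then lim_{ε→0⁺} ∫₀^{1/2} f_ε(x) (φ(x) − φ(0)) dx = 0, where f_ε(x) = b_ε/(x(1−x)+ε) with b_ε = c⁺(ε)/ln((c⁺(ε)+1/2)/(c⁺(ε)−1/2)) and c⁺(ε) = √(1/4 + ε). -/

import Mathlib

open MeasureTheory Topology Filter

/-- `c⁺(ε) = √(1/4 + ε)`. -/
noncomputable def cplus (ε : ℝ) : ℝ := Real.sqrt (1/4 + ε)

/-- The normalization constant `b_ε = c⁺(ε)/log((c⁺(ε)+1/2)/(c⁺(ε)−1/2))`. -/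
noncomputable def bconst (ε : ℝ) : ℝ :=
  cplus ε / Real.log ((cplus ε + 1/2) / (cplus ε - 1/2))

/-- The viscous steady state `f_ε(x) = b_ε/(x(1−x)+ε)`. -/
noncomputable def fvisc (ε x : ℝ) : ℝ := bconst ε / (x * (1 - x) + ε)

lemma cplus_gt (ε : ℝ) (hε : 0 < ε) : (1/2 : ℝ) < cplus ε := by
  have h : Real.sqrt ((1/2)^2) < Real.sqrt ((1/2)^2 + ε) :=
    Real.sqrt_lt_sqrt (by positivity) (by linarith)
  rw [Real.sqrt_sq (by norm_num : (0:ℝ) ≤ 1/2)] at h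
  simpa [cplus, show (1/4:ℝ) = (1/2)^2 by norm_num] using h

lemma bconst_tendsto : Tendsto bconst (𝓝[>] (0:ℝ)) (𝓝 0) := by
  have hcp : Tendsto cplus (𝓝[>] (0:ℝ)) (𝓝 (1/2)) := by
    have hc : Continuous cplus := by unfold cplus; continuity
    have := (hc.tendsto 0).mono_left (nhdsWithin_le_nhds (s := Set.Ioi (0:ℝ)))
    simpa [cplus, show (1/4:ℝ) = (1/2)^2 by norm_num,
      Real.sqrt_sq (by norm_num : (0:ℝ) ≤ 1/2)] using this
  have hsub : Tendsto (fun ε => cplus ε - 1/2) (𝓝[>] (0:ℝ)) (𝓝[>] 0) := by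
    rw [tendsto_nhdsWithin_iff]
    refine ⟨by simpa using hcp.sub (tendsto_const_nhds (x := (1/2:ℝ))), ?_⟩
    filter_upwards [self_mem_nhdsWithin] with ε hε
    have := cplus_gt ε hε
    simp only [Set.mem_Ioi]; linarith
  have hlog : Tendsto (fun ε => Real.log ((cplus ε + 1/2) / (cplus ε - 1/2)))
      (𝓝[>] (0:ℝ)) atTop := by
    apply Real.tendsto_log_atTop.comp
    have heq : ∀ᶠ ε in 𝓝[>] (0:ℝ),
        (cplus ε + 1/2) / (cplus ε - 1/2) = 1 + (cplus ε - 1/2)⁻¹ := by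
      filter_upwards [self_mem_nhdsWithin] with ε hε
      have h := cplus_gt ε hε
      have hne : cplus ε - 1/2 ≠ 0 := ne_of_gt (by linarith)
      rw [div_eq_iff hne, add_mul, one_mul, inv_mul_cancel₀ hne]
      ring
    rw [tendsto_congr' heq]
    exact tendsto_atTop_add_const_left _ 1 (tendsto_inv_nhdsGT_zero.comp hsub)
  have h2 := hcp.mul hlog.inv_tendsto_atTop
  rw [show (1/2:ℝ) * 0 = 0 by ring] at h2
  exact h2.congr fun ε => (div_eq_mul_inv _ _).symm

/-- For `φ` continuously differentiable,
`lim_{ε→0⁺} ∫₀^{1/2} f_ε(x)(φ(x) − φ(0)) dx = 0`. -/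
theorem tendsto_integral_fvisc_sub_left (φ : ℝ → ℝ) (hφ : ContDiff ℝ 1 φ) :
    Tendsto (fun ε : ℝ => ∫ x in (0:ℝ)..(1/2), fvisc ε x * (φ x - φ 0))
      (𝓝[>] (0:ℝ)) (𝓝 0) := by
  obtain ⟨x₀, hx₀, hCmax⟩ := (isCompact_Icc (a := (0:ℝ)) (b := 1/2)).exists_isMaxOn
    ⟨0, by norm_num⟩ ((hφ.continuous_deriv le_rfl).norm.continuousOn)
  have hC : ∀ y ∈ Set.Icc (0:ℝ) (1/2), ‖deriv φ y‖ ≤ ‖deriv φ x₀‖ := fun y hy => hCmax hy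
  set C := ‖deriv φ x₀‖ with hCdef
  have hC0 : (0:ℝ) ≤ C := norm_nonneg _
  have hphi : ∀ x ∈ Set.Icc (0:ℝ) (1/2), |φ x - φ 0| ≤ C * x := by
    intro x hx
    have h := (convex_Icc (0:ℝ) (1/2)).norm_image_sub_le_of_norm_deriv_le
      (fun y _ => (hφ.differentiable one_ne_zero) y)
      (fun y hy => hC y hy) (Set.left_mem_Icc.2 (by norm_num)) hx
    simpa [Real.norm_eq_abs, abs_of_nonneg hx.1] using h
  apply squeeze_zero_norm' (a := fun ε => C * |bconst ε|)
  · filter_upwards [self_mem_nhdsWithin] with ε hε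
    have hε' : (0:ℝ) < ε := hε
    have key : ∀ x ∈ Set.uIoc (0:ℝ) (1/2),
        ‖fvisc ε x * (φ x - φ 0)‖ ≤ 2 * C * |bconst ε| := by
      intro x hx
      rw [Set.uIoc_of_le (by norm_num : (0:ℝ) ≤ 1/2)] at hx
      obtain ⟨hx0, hx2⟩ := hx
      have hd : x / 2 ≤ x * (1 - x) + ε := by nlinarith
      have hd0 : (0:ℝ) < x * (1 - x) + ε := by nlinarith
      have h1 : ‖fvisc ε x * (φ x - φ 0)‖
          = |bconst ε| / (x * (1 - x) + ε) * |φ x - φ 0| := by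
        rw [norm_mul, Real.norm_eq_abs, Real.norm_eq_abs, fvisc, abs_div,
          abs_of_pos hd0]
      rw [h1]
      calc |bconst ε| / (x * (1 - x) + ε) * |φ x - φ 0|
          ≤ |bconst ε| / (x / 2) * (C * x) := by
            gcongr
            all_goals first
              | positivity
              | exact hd
              | exact hphi x ⟨le_of_lt hx0, hx2⟩
        _ = 2 * C * |bconst ε| := by field_simp
    calc ‖∫ x in (0:ℝ)..(1/2), fvisc ε x * (φ x - φ 0)‖
        ≤ 2 * C * |bconst ε| * |(1/2 : ℝ) - 0| :=
          intervalIntegral.norm_integral_le_of_norm_le_const key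
      _ = C * |bconst ε| := by
          rw [show |(1/2:ℝ) - 0| = 1/2 by norm_num]; ring
  · have h3 := (tendsto_const_nhds (x := C) (f := 𝓝[>] (0:ℝ))).mul bconst_tendsto.abs
    simpa using h3
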